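/- Let d ∈ {2,3} and let (h_n) ⊂ (0,1) with h_n → 0⁺ and h_n^{−2} ∉ {λ_ℓ² : ℓ ∈ ℕ} for all n, so that σ_n := σ(h_n) ∈ (0,1); write ℓ_n := ℓ(h_n). (i) There exists C > 1 such that for every integer Υ ≥ 1 there exists ν ∈ ℕ such that for all n ≥ ν and all integers k with |k| ≤ Υ: |m_{ℓ_n+k}/(λ_{ℓ_n+k}² − h_n^{−2})² − h_n^{3−d}/(2(d−1)(k−σ_n)²)| ≤ C h_n^{3−d} · Υ h_n/(k−σ_n)². (ii) If moreover σ_n → σ ∈ [0,1], then there exists C > 1 such that for every integer Υ ≥ 1 there exists ν ∈ ℕ such that for all n ≥ ν and all integers k with |k| ≤ Υ and k ≠ σ: |m_{ℓ_n+k}/(λ_{ℓ_n+k}² − h_n^{−2})² − h_n^{3−d}/(2(d−1)(k−σ)²)| ≤ C h_n^{3−d}(Υ h_n + |σ_n − σ|)/(k−σ)². -/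

import Mathlib

set_option maxHeartbeats 1600000

open Filter

/-- The squared Laplace eigenvalue `λ_ℓ² = ℓ(ℓ+d−1)` on `S^d`, extended to integer index. -/
noncomputable def lam2 (d : ℕ) (l : ℤ) : ℝ := (l : ℝ) * ((l : ℝ) + (d : ℝ) - 1)

/-- The multiplicity `m_ℓ` (`2ℓ+1` if `d = 2`, `(ℓ+1)²` if `d = 3`), extended to integer
index. -/
noncomputable def mult (d : ℕ) (l : ℤ) : ℝ :=
  if d = 2 then 2 * (l : ℝ) + 1 else ((l : ℝ) + 1) ^ 2

lemma core2 (e H a x u : ℝ) (heH : e * H = 1) (hu : 1 ≤ u)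
    (he : 2*(u+2) ≤ e) (ha : 0 ≤ a) (he2 : e^2 = a*(a+1)) (hx : |x| ≤ u + 1) :
    |(2*a+1+2*x)/(2*a+1+x)^2 - H/2| ≤ 4*u*(H^2) := by
  have hu0 : 0 < u := lt_of_lt_of_le one_pos hu
  have he0 : 0 < e := by linarith
  have hH0 : 0 < H := by
    rcases lt_trichotomy H 0 with hc|hc|hc
    · nlinarith
    · rw [hc, mul_zero] at heH; norm_num at heH
    · exact hc
  have hHe : H = e⁻¹ := by field_simp; linarith [heH]
  obtain ⟨hx1, hx2⟩ := abs_le.mp hx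
  have hr0 : (0:ℝ) < 2*a+1 := by linarith
  have hre : (2*a+1)^2 = 4*e^2+1 := by nlinarith [he2]
  have h1 : 2*e ≤ 2*a+1 := by nlinarith
  have hH1 : H ≤ 1 := by nlinarith
  have h2 : 2*a+1 ≤ 2*e + H/4 := by nlinarith [sq_nonneg H]
  have hBe : e ≤ 2*a+1+x := by linarith
  have hB0 : (0:ℝ) < 2*a+1+x := by linarith
  have hHe2 : H^2*(e*e) = 1 := by nlinarith
  have hdecomp : (2*a+1+2*x)/(2*a+1+x)^2 - H/2
      = (2*e - (2*a+1+x))/(2*e*(2*a+1+x)) + x/(2*a+1+x)^2 := by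
    rw [hHe]; field_simp; ring
  rw [hdecomp]
  have hden1 : (0:ℝ) < 2*e*(2*a+1+x) := by positivity
  have hnum1 : |2*e - (2*a+1+x)| ≤ 9/4*u := by
    rw [abs_le]; constructor <;> nlinarith
  have t1 : |(2*e - (2*a+1+x))/(2*e*(2*a+1+x))| ≤ (9/4*u)/(2*e*e) := by
    rw [abs_div, abs_of_pos hden1]
    exact div_le_div₀ (by positivity) hnum1 (by positivity) (by nlinarith)
  have t2 : |x/(2*a+1+x)^2| ≤ (u+1)/(e*e) := by
    rw [abs_div, abs_of_pos (by positivity : (0:ℝ) < (2*a+1+x)^2)]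
    exact div_le_div₀ (by positivity) hx (by positivity)
      (by nlinarith [mul_le_mul hBe hBe he0.le hB0.le])
  have hee1 : (9/4*u)/(2*e*e) = 9/8*u*H^2 := by
    field_simp
    nlinarith [hHe2]
  have hee2 : (u+1)/(e*e) = (u+1)*H^2 := by
    field_simp
    nlinarith [hHe2]
  calc |(2*e - (2*a+1+x))/(2*e*(2*a+1+x)) + x/(2*a+1+x)^2|
      ≤ |(2*e - (2*a+1+x))/(2*e*(2*a+1+x))| + |x/(2*a+1+x)^2| := abs_add_le _ _
    _ ≤ (9/4*u)/(2*e*e) + (u+1)/(e*e) := by linarith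
    _ ≤ 4*u*(H^2) := by
        rw [hee1, hee2]; nlinarith [sq_nonneg H, mul_pos hu0 (mul_pos hH0 hH0)]

lemma core3 (e H a x u : ℝ) (heH : e * H = 1) (hu : 1 ≤ u)
    (he : 2*(u+2) ≤ e) (ha : 0 ≤ a) (he2 : e^2 = a*(a+2)) (hx : |x| ≤ u + 1) :
    |(a+1+x)^2/(2*a+2+x)^2 - 1/4| ≤ 4*u*H := by
  have hu0 : 0 < u := lt_of_lt_of_le one_pos hu
  have he0 : 0 < e := by linarith
  have hH0 : 0 < H := by
    rcases lt_trichotomy H 0 with hc|hc|hc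
    · nlinarith
    · rw [hc, mul_zero] at heH; norm_num at heH
    · exact hc
  obtain ⟨hx1, hx2⟩ := abs_le.mp hx
  have hr : (a+1)^2 = e^2+1 := by nlinarith
  have h1 : e ≤ a+1 := by nlinarith
  have hBe : e ≤ 2*a+2+x := by linarith
  have hB0 : (0:ℝ) < 2*a+2+x := by linarith
  have hdecomp : (a+1+x)^2/(2*a+2+x)^2 - 1/4
      = (x*(2*(2*a+2+x)+x))/(4*(2*a+2+x)^2) := by
    rw [div_sub_div _ _ (by positivity) (by norm_num), div_eq_div_iff (by positivity) (by positivity)]; ring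
  rw [hdecomp]
  have hnum : |x*(2*(2*a+2+x)+x)| ≤ (u+1)*(2*(2*a+2+x)+(u+1)) := by
    rw [abs_mul]
    apply mul_le_mul hx _ (abs_nonneg _) (by linarith)
    rw [abs_le]; constructor <;> nlinarith
  rw [abs_div, abs_of_pos (by positivity : (0:ℝ) < 4*(2*a+2+x)^2)]
  rw [div_le_iff₀ (by positivity)]
  have hHB : 1 ≤ H*(2*a+2+x) := by nlinarith
  nlinarith [mul_pos hu0 hB0, mul_pos hH0 hB0, sq_nonneg (2*a+2+x),
    mul_le_mul_of_nonneg_left hHB (le_of_lt (mul_pos hu0 hB0)),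
    mul_pos (mul_pos hu0 hH0) (mul_pos hB0 hB0)]

lemma step (d : ℕ) (hd : d = 2 ∨ d = 3) (H : ℝ) (hH0 : 0 < H) (L : ℕ) (s : ℝ)
    (hs0 : 0 < s) (hs1 : s < 1)
    (heq : H ^ (-2 : ℤ) = ((L : ℝ) + s) * ((L : ℝ) + s + (d : ℝ) - 1))
    (U : ℕ) (hU : 1 ≤ U) (hbig : 2*((U:ℝ)+2) ≤ H⁻¹)
    (k : ℤ) (hk : |k| ≤ (U : ℤ)) :
    |mult d ((L:ℤ) + k) / (lam2 d ((L:ℤ) + k) - H ^ (-2 : ℤ)) ^ 2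
      - H ^ ((3:ℤ) - (d:ℤ)) / (2 * ((d:ℝ) - 1) * ((k:ℝ) - s) ^ 2)|
      ≤ 5 * H ^ ((3:ℤ) - (d:ℤ)) * ((U:ℝ) * H) / ((k:ℝ) - s) ^ 2 := by
  have hHne : H ≠ 0 := ne_of_gt hH0
  have heH : H⁻¹ * H = 1 := inv_mul_cancel₀ hHne
  have hzpow : H ^ (-2 : ℤ) = (H⁻¹)^2 := by
    rw [zpow_neg, inv_pow]; norm_num
  have hk' : |(k:ℝ)| ≤ (U:ℝ) := by exact_mod_cast hk
  obtain ⟨hk1, hk2⟩ := abs_le.mp hk'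
  have hU1 : (1:ℝ) ≤ (U:ℝ) := by exact_mod_cast hU
  have hx : |(k:ℝ) - s| ≤ (U:ℝ) + 1 := by
    rw [abs_le]; constructor <;> linarith
  have hxne : (k:ℝ) - s ≠ 0 := by
    rcases le_or_gt k 0 with hk0 | hk0
    · have : (k:ℝ) ≤ 0 := by exact_mod_cast hk0
      exact ne_of_lt (by linarith)
    · have : (1:ℝ) ≤ (k:ℝ) := by exact_mod_cast hk0
      exact ne_of_gt (by linarith)
  have hx2 : (0:ℝ) < ((k:ℝ) - s)^2 :=
    lt_of_le_of_ne (sq_nonneg _) (Ne.symm (pow_ne_zero 2 hxne))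
  have hLs : (0:ℝ) ≤ (L:ℝ) + s := by positivity
  have he0 : (0:ℝ) < H⁻¹ := inv_pos.mpr hH0
  rcases hd with rfl | rfl
  · -- d = 2
    have he2 : (H⁻¹)^2 = ((L:ℝ)+s) * (((L:ℝ)+s) + 1) := by
      rw [← hzpow, heq]; push_cast; ring
    have hcore := core2 (H⁻¹) H ((L:ℝ)+s) ((k:ℝ)-s) (U:ℝ) heH hU1 hbig hLs he2 hx
    have hB0 : (0:ℝ) < 2*((L:ℝ)+s)+1+((k:ℝ)-s) := by
      nlinarith [sq_nonneg (H⁻¹ - ((L:ℝ)+s)), he2, hx, abs_le.mp hx]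
    have hlam : lam2 2 ((L:ℤ) + k) - H ^ (-2:ℤ)
        = ((k:ℝ)-s) * (2*((L:ℝ)+s)+1+((k:ℝ)-s)) := by
      rw [hzpow, he2, lam2]; push_cast; ring
    have hmul : mult 2 ((L:ℤ) + k) = 2*((L:ℝ)+s)+1+2*((k:ℝ)-s) := by
      rw [mult, if_pos rfl]; push_cast; ring
    have hpow : H ^ ((3:ℤ) - (2:ℕ)) = H := by norm_num
    rw [hlam, hmul, hpow]
    have hiden : (2*((L:ℝ)+s)+1+2*((k:ℝ)-s)) / (((k:ℝ)-s) * (2*((L:ℝ)+s)+1+((k:ℝ)-s)))^2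
        - H / (2 * (((2:ℕ):ℝ) - 1) * ((k:ℝ) - s)^2)
        = ((2*((L:ℝ)+s)+1+2*((k:ℝ)-s))/(2*((L:ℝ)+s)+1+((k:ℝ)-s))^2 - H/2) / ((k:ℝ)-s)^2 := by
      push_cast
      field_simp
      ring
    rw [hiden, abs_div, abs_of_pos hx2]
    calc |(2*((L:ℝ)+s)+1+2*((k:ℝ)-s))/(2*((L:ℝ)+s)+1+((k:ℝ)-s))^2 - H/2| / ((k:ℝ)-s)^2
        ≤ (4*(U:ℝ)*(H^2)) / ((k:ℝ)-s)^2 := by gcongr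
      _ ≤ 5 * H * ((U:ℝ) * H) / ((k:ℝ) - s)^2 :=
          div_le_div₀ (by positivity) (by nlinarith) hx2 le_rfl
  · -- d = 3
    have he2 : (H⁻¹)^2 = ((L:ℝ)+s) * (((L:ℝ)+s) + 2) := by
      rw [← hzpow, heq]; push_cast; ring
    have hcore := core3 (H⁻¹) H ((L:ℝ)+s) ((k:ℝ)-s) (U:ℝ) heH hU1 hbig hLs he2 hx
    have hB0 : (0:ℝ) < 2*((L:ℝ)+s)+2+((k:ℝ)-s) := by
      nlinarith [sq_nonneg (H⁻¹ - ((L:ℝ)+s)), he2, abs_le.mp hx]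
    have hlam : lam2 3 ((L:ℤ) + k) - H ^ (-2:ℤ)
        = ((k:ℝ)-s) * (2*((L:ℝ)+s)+2+((k:ℝ)-s)) := by
      rw [hzpow, he2, lam2]; push_cast; ring
    have hmul : mult 3 ((L:ℤ) + k) = (((L:ℝ)+s)+1+((k:ℝ)-s))^2 := by
      rw [mult, if_neg (by norm_num)]; push_cast; ring
    have hpow : H ^ ((3:ℤ) - (3:ℕ)) = 1 := by norm_num
    rw [hlam, hmul, hpow]
    have hiden : (((L:ℝ)+s)+1+((k:ℝ)-s))^2 / (((k:ℝ)-s) * (2*((L:ℝ)+s)+2+((k:ℝ)-s)))^2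
        - 1 / (2 * (((3:ℕ):ℝ) - 1) * ((k:ℝ) - s)^2)
        = ((((L:ℝ)+s)+1+((k:ℝ)-s))^2/(2*((L:ℝ)+s)+2+((k:ℝ)-s))^2 - 1/4) / ((k:ℝ)-s)^2 := by
      push_cast
      field_simp
      ring
    rw [hiden, abs_div, abs_of_pos hx2]
    calc |(((L:ℝ)+s)+1+((k:ℝ)-s))^2/(2*((L:ℝ)+s)+2+((k:ℝ)-s))^2 - 1/4| / ((k:ℝ)-s)^2
        ≤ (4*(U:ℝ)*H) / ((k:ℝ)-s)^2 := by gcongr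
      _ ≤ 5 * 1 * ((U:ℝ) * H) / ((k:ℝ) - s)^2 :=
          div_le_div₀ (by positivity) (by nlinarith) hx2 le_rfl
theorem stmt_5 (d : ℕ) (hd : d = 2 ∨ d = 3)
    (h : ℕ → ℝ) (hh : ∀ n, h n ∈ Set.Ioo (0 : ℝ) 1)
    (hto : Tendsto h atTop (nhds 0))
    (hspec : ∀ n, ∀ l : ℕ, (h n) ^ (-2 : ℤ) ≠ lam2 d (l : ℤ))
    (L : ℕ → ℕ) (s : ℕ → ℝ) (hs : ∀ n, s n ∈ Set.Ico (0 : ℝ) 1)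
    (heq : ∀ n, (h n) ^ (-2 : ℤ) =
      ((L n : ℝ) + s n) * ((L n : ℝ) + s n + (d : ℝ) - 1)) :
    (∃ C : ℝ, 1 < C ∧ ∀ Υ : ℕ, 1 ≤ Υ → ∃ ν : ℕ, ∀ n ≥ ν, ∀ k : ℤ, |k| ≤ (Υ : ℤ) →
      |mult d ((L n : ℤ) + k) / (lam2 d ((L n : ℤ) + k) - (h n) ^ (-2 : ℤ)) ^ 2
        - (h n) ^ ((3 : ℤ) - (d : ℤ)) / (2 * ((d : ℝ) - 1) * ((k : ℝ) - s n) ^ 2)|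
        ≤ C * (h n) ^ ((3 : ℤ) - (d : ℤ)) * ((Υ : ℝ) * h n) / ((k : ℝ) - s n) ^ 2) ∧
    (∀ σ : ℝ, σ ∈ Set.Icc (0 : ℝ) 1 → Tendsto s atTop (nhds σ) →
      ∃ C : ℝ, 1 < C ∧ ∀ Υ : ℕ, 1 ≤ Υ → ∃ ν : ℕ, ∀ n ≥ ν, ∀ k : ℤ,
        |k| ≤ (Υ : ℤ) → (k : ℝ) ≠ σ →
        |mult d ((L n : ℤ) + k) / (lam2 d ((L n : ℤ) + k) - (h n) ^ (-2 : ℤ)) ^ 2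
          - (h n) ^ ((3 : ℤ) - (d : ℤ)) / (2 * ((d : ℝ) - 1) * ((k : ℝ) - σ) ^ 2)|
          ≤ C * (h n) ^ ((3 : ℤ) - (d : ℤ)) * ((Υ : ℝ) * h n + |s n - σ|)
              / ((k : ℝ) - σ) ^ 2) := by
  have hpos : ∀ n, 0 < h n := fun n => (hh n).1
  have hs0 : ∀ n, 0 < s n := by
    intro n
    rcases eq_or_lt_of_le (hs n).1 with he | he
    · exfalso
      apply hspec n (L n)
      rw [heq n, lam2, ← he]
      push_cast
      ring
    · exact he
  have hinv : Tendsto (fun n => (h n)⁻¹) atTop atTop := by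
    apply Filter.Tendsto.inv_tendsto_nhdsGT_zero
    exact tendsto_nhdsWithin_iff.mpr ⟨hto, Filter.Eventually.of_forall hpos⟩
  constructor
  · -- part (i)
    refine ⟨5, by norm_num, ?_⟩
    intro U hU
    obtain ⟨ν, hν⟩ := eventually_atTop.mp (hinv.eventually_ge_atTop (2*((U:ℝ)+2)))
    refine ⟨ν, fun n hn k hk => ?_⟩
    exact step d hd (h n) (hpos n) (L n) (s n) (hs0 n) (hs n).2 (heq n) U hU (hν n hn) k hk
  · -- part (ii)
    rintro σ ⟨hσ0, hσ1⟩ hσt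
    set δ : ℝ := min (if σ = 0 then 1 else σ) (if σ = 1 then 1 else 1 - σ) with hδdef
    have hδ0 : 0 < δ := by
      apply lt_min <;> split_ifs with hcase
      · norm_num
      · exact lt_of_le_of_ne hσ0 (Ne.symm hcase)
      · norm_num
      · have := lt_of_le_of_ne hσ1 hcase
        linarith
    have hδ1 : δ ≤ 1 := by
      refine le_trans (min_le_left _ _) ?_
      split_ifs <;> linarith
    have hδk : ∀ k : ℤ, (k:ℝ) ≠ σ → δ ≤ |(k:ℝ) - σ| := by
      intro k hkσ
      have hcases : k ≤ -1 ∨ k = 0 ∨ k = 1 ∨ 2 ≤ k := by omega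
      rcases hcases with hc | rfl | rfl | hc
      · have hkr : (k:ℝ) ≤ -1 := by exact_mod_cast hc
        rw [abs_sub_comm, abs_of_nonneg (by linarith)]
        linarith
      · have hσne : σ ≠ 0 := fun hcon => hkσ (by push_cast; rw [hcon])
        have : δ ≤ σ := le_trans (min_le_left _ _) (by rw [if_neg hσne])
        rw [abs_sub_comm]
        push_cast
        rw [abs_of_nonneg (by linarith)]
        linarith
      · have hσne : σ ≠ 1 := fun hcon => hkσ (by push_cast; rw [hcon])
        have : δ ≤ 1 - σ := le_trans (min_le_right _ _) (by rw [if_neg hσne])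
        push_cast
        rw [abs_of_nonneg (by linarith)]
        linarith
      · have hkr : (2:ℝ) ≤ (k:ℝ) := by exact_mod_cast hc
        rw [abs_of_nonneg (by linarith)]
        linarith
    have hC1 : (1:ℝ) < 21 + 3/δ := by
      have h30 : 0 < 3/δ := by positivity
      linarith
    refine ⟨21 + 3/δ, hC1, ?_⟩
    intro U hU
    obtain ⟨ν₁, hν₁⟩ := eventually_atTop.mp (hinv.eventually_ge_atTop (2*((U:ℝ)+2)))
    obtain ⟨ν₂, hν₂⟩ := Metric.tendsto_atTop.mp hσt (δ/2) (by positivity)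
    refine ⟨max ν₁ ν₂, fun n hn k hk hkσ => ?_⟩
    have hb := step d hd (h n) (hpos n) (L n) (s n) (hs0 n) (hs n).2 (heq n) U hU
      (hν₁ n (le_trans (le_max_left _ _) hn)) k hk
    have hsσ : |s n - σ| ≤ δ/2 := by
      have := hν₂ n (le_trans (le_max_right _ _) hn)
      rw [Real.dist_eq] at this
      exact le_of_lt this
    set T : ℝ := (h n) ^ ((3:ℤ) - (d:ℤ)) with hTdef
    set c : ℝ := (d:ℝ) - 1 with hcdef
    set x : ℝ := (k:ℝ) - s n with hxdef
    set y : ℝ := (k:ℝ) - σ with hydef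
    set E : ℝ := mult d ((L n : ℤ) + k) / (lam2 d ((L n : ℤ) + k) - (h n) ^ (-2 : ℤ)) ^ 2
      with hEdef
    have hT : 0 < T := zpow_pos (hpos n) _
    have hc1 : (1:ℝ) ≤ c := by rw [hcdef]; rcases hd with rfl | rfl <;> norm_num
    have hy : δ ≤ |y| := hδk k hkσ
    have hyne : y ≠ 0 := by
      intro hcon
      rw [hcon, abs_zero] at hy
      linarith
    have hy2 : 0 < y^2 := lt_of_le_of_ne (sq_nonneg _) (Ne.symm (pow_ne_zero 2 hyne))
    have hxy : |x - y| ≤ δ/2 := by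
      have : x - y = σ - s n := by rw [hxdef, hydef]; ring
      rw [this, abs_sub_comm]
      exact hsσ
    have hxl : |y| ≤ 2*|x| := by
      have h1 : |y| ≤ |x| + |x - y| := by
        have := abs_sub_abs_le_abs_sub y x
        have h2 := abs_sub_comm y x
        linarith [abs_sub_abs_le_abs_sub y x, (abs_sub_comm y x).le]
      linarith [hxy, hy]
    have hx2y : y^2 ≤ 4*x^2 := by
      nlinarith [sq_abs x, sq_abs y, abs_nonneg x, abs_nonneg y]
    have hx2 : 0 < x^2 := by nlinarith
    have hUh : (0:ℝ) ≤ (U:ℝ) * h n := mul_nonneg (Nat.cast_nonneg U) (hpos n).le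
    -- triangle inequality
    have tri := abs_sub_le E (T/(2*c*x^2)) (T/(2*c*y^2))
    -- second term bound
    have hterm2 : |T/(2*c*x^2) - T/(2*c*y^2)| ≤ 3*T*|s n - σ|/(δ*y^2) := by
      have hc0 : (0:ℝ) < c := by linarith
      have hEq : T/(2*c*x^2) - T/(2*c*y^2) = T*(y^2 - x^2)/(2*c*x^2*y^2) := by
        rw [div_sub_div _ _ (mul_pos (mul_pos two_pos hc0) hx2).ne' (mul_pos (mul_pos two_pos hc0) hy2).ne',
          div_eq_div_iff (mul_pos (mul_pos (mul_pos two_pos hc0) hx2) (mul_pos (mul_pos two_pos hc0) hy2)).ne'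
          (mul_pos (mul_pos (mul_pos two_pos hc0) hx2) hy2).ne']
        ring
      rw [hEq, abs_div, abs_of_pos (by nlinarith [mul_pos (mul_pos hc0 hx2) hy2] : (0:ℝ) < 2*c*x^2*y^2), abs_mul,
        abs_of_pos hT]
      rw [div_le_div_iff₀ (by nlinarith [mul_pos (mul_pos hc0 hx2) hy2]) (by nlinarith [mul_pos hδ0 hy2])]
      have h1 : |y^2 - x^2| ≤ |s n - σ| * (|x| + |y|) := by
        have hfac : y^2 - x^2 = (y - x) * (y + x) := by ring
        rw [hfac, abs_mul]
        have e1 : |y - x| = |s n - σ| := by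
          rw [abs_sub_comm]
          rw [show x - y = σ - s n by rw [hxdef, hydef]; ring, abs_sub_comm]
        rw [e1]
        exact mul_le_mul_of_nonneg_left ((abs_add_le y x).trans (by rw [add_comm])) (abs_nonneg _)
      have h2 : δ*(|x| + |y|) ≤ 6*x^2 := by
        have ha1 : δ ≤ 2*|x| := le_trans hy hxl
        have ha2 : |x| + |y| ≤ 3*|x| := by linarith
        nlinarith [sq_abs x, abs_nonneg x, abs_nonneg y]
      calc T * |y^2 - x^2| * (δ * y^2)
          ≤ T * (|s n - σ| * (|x| + |y|)) * (δ * y^2) := by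
            have hnn : (0:ℝ) ≤ δ * y^2 := by positivity
            nlinarith [mul_le_mul_of_nonneg_left h1 hT.le,
              mul_le_mul_of_nonneg_right (mul_le_mul_of_nonneg_left h1 hT.le) hnn]
        _ = T * |s n - σ| * y^2 * (δ * (|x| + |y|)) := by ring
        _ ≤ T * |s n - σ| * y^2 * (6*x^2) := by
            have hnn : (0:ℝ) ≤ T * |s n - σ| * y^2 := by positivity
            exact mul_le_mul_of_nonneg_left h2 hnn
        _ ≤ 3 * T * |s n - σ| * (2*c*x^2*y^2) := by
            nlinarith [mul_nonneg (mul_nonneg hT.le (abs_nonneg (s n - σ)))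
              (mul_nonneg (sq_nonneg x) (sq_nonneg y))]
    -- first term bound transfer x → y
    have hterm1 : 5*T*((U:ℝ)*h n)/x^2 ≤ 20*T*((U:ℝ)*h n)/y^2 := by
      rw [div_le_div_iff₀ hx2 hy2]
      nlinarith [mul_nonneg hT.le hUh]
    -- combination
    have hfinal : 20*T*((U:ℝ)*h n)/y^2 + 3*T*|s n - σ|/(δ*y^2)
        ≤ (21 + 3/δ) * T * ((U:ℝ) * h n + |s n - σ|) / y^2 := by
      have hrw : 3*T*|s n - σ|/(δ*y^2) = (3/δ)*T*|s n - σ|/y^2 := by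
        field_simp
      rw [hrw, ← add_div, div_le_div_iff₀ hy2 hy2]
      have hnum : 20*T*((U:ℝ)*h n) + (3/δ)*T*|s n - σ|
          ≤ (21 + 3/δ) * T * ((U:ℝ) * h n + |s n - σ|) := by
        have hd0 : (0:ℝ) ≤ 3/δ := by positivity
        nlinarith [mul_nonneg hT.le hUh, mul_nonneg hT.le (abs_nonneg (s n - σ)),
          mul_nonneg hd0 (mul_nonneg hT.le hUh)]
      nlinarith [hnum, hy2]
    calc |E - T / (2 * c * y^2)|
        ≤ |E - T/(2*c*x^2)| + |T/(2*c*x^2) - T/(2*c*y^2)| := tri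
      _ ≤ 5*T*((U:ℝ)*h n)/x^2 + 3*T*|s n - σ|/(δ*y^2) := add_le_add hb hterm2
      _ ≤ 20*T*((U:ℝ)*h n)/y^2 + 3*T*|s n - σ|/(δ*y^2) := by linarith
      _ ≤ (21 + 3/δ) * T * ((U:ℝ) * h n + |s n - σ|) / y^2 := hfinal
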